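/- If L₁ and L₂ are d-derivations of a Lie algebra 𝔤, then the map [L₁,L₂] defined by [L₁,L₂](D) = L₁(ad(L₂(D))) - L₂(ad(L₁(D))) is again a d-derivation of 𝔤. -/

import Mathlib

variable {k : Type*} [Field k] {g : Type*} [LieRing g] [LieAlgebra k g]

/-- A `d`-derivation of `g`: a linear map `L : Der(g) → g` with
`L ⁅D₁, D₂⁆ = D₁ (L D₂) - D₂ (L D₁)`. -/
def IsDDerivation (L : LieDerivation k g g →ₗ[k] g) : Prop :=
  ∀ D₁ D₂ : LieDerivation k g g, L ⁅D₁, D₂⁆ = D₁ (L D₂) - D₂ (L D₁)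

/-- The inner `d`-derivation `L_x : D ↦ -D x`. -/
def innerDDer (x : g) : LieDerivation k g g →ₗ[k] g where
  toFun D := -(D x)
  map_add' := by intros; simp [add_comm]
  map_smul' := by intros; simp

/-- The bracket of `d`-derivations: `[L₁,L₂](D) = L₁(ad(L₂ D)) - L₂(ad(L₁ D))`. -/
def dBracket (L₁ L₂ : LieDerivation k g g →ₗ[k] g) : LieDerivation k g g →ₗ[k] g :=
  L₁ ∘ₗ ((LieDerivation.ad k g : g →ₗ⁅k⁆ LieDerivation k g g) : g →ₗ[k] LieDerivation k g g) ∘ₗ L₂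
    - L₂ ∘ₗ ((LieDerivation.ad k g : g →ₗ⁅k⁆ LieDerivation k g g) : g →ₗ[k] LieDerivation k g g) ∘ₗ L₁

/-- The action of `Der(g)` on `d`-derivations: `D(L) = D ∘ L - L ∘ ad(D)`. -/
def derAct (D : LieDerivation k g g) (L : LieDerivation k g g →ₗ[k] g) :
    LieDerivation k g g →ₗ[k] g :=
  (D : g →ₗ[k] g) ∘ₗ L - L ∘ₗ ((LieAlgebra.ad k (LieDerivation k g g)) D)

/-- The bracket of the full graph `C(g) = Der(g) ⋉ g`. -/
def fgBracket (p q : LieDerivation k g g × g) : LieDerivation k g g × g :=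
  (⁅p.1, q.1⁆, p.1 q.2 - q.1 p.2 + ⁅p.2, q.2⁆)

/-- A derivation of the full graph: a linear endomorphism satisfying Leibniz. -/
def IsFGDerivation (T : (LieDerivation k g g × g) →ₗ[k] (LieDerivation k g g × g)) : Prop :=
  ∀ p q, T (fgBracket p q) = fgBracket (T p) q + fgBracket p (T q)

/-- The derivation `𝔇_{(D,L)}` of the full graph. -/
def fgDer (D : LieDerivation k g g) (L : LieDerivation k g g →ₗ[k] g)
    (p : LieDerivation k g g × g) : LieDerivation k g g × g :=
  (⁅D, p.1⁆, D p.2 + L (LieDerivation.ad k g p.2) + L p.1)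

theorem stmt1 (L₁ L₂ : LieDerivation k g g →ₗ[k] g)
    (h₁ : IsDDerivation L₁) (h₂ : IsDDerivation L₂) :
    IsDDerivation (dBracket L₁ L₂) := by
  intro D₁ D₂
  simp only [dBracket, LinearMap.sub_apply, LinearMap.coe_comp, Function.comp_apply,
    LieHom.coe_toLinearMap]
  rw [h₁, h₂, map_sub, map_sub, map_sub, map_sub,
    ← LieDerivation.lie_der_ad_eq_ad_der, ← LieDerivation.lie_der_ad_eq_ad_der,
    ← LieDerivation.lie_der_ad_eq_ad_der, ← LieDerivation.lie_der_ad_eq_ad_der,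
    h₁, h₁, h₂, h₂]
  simp only [LieDerivation.ad_apply_apply, map_sub]
  rw [← lie_skew (L₂ D₂) (L₁ D₁), ← lie_skew (L₂ D₁) (L₁ D₂)]
  abel
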